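/- arXiv:1212.4722 — 5 statements merged into one kernel-verified Lean document; each statement's English description precedes it below -/
import Mathlib

section
/- Let n ≥ 1, let V, U ⊆ ℝ^{2n} be open, let F : V → ℝ be C², let x : U → V be C¹, and set y := Y_F ∘ x : U → ℝ^{2n}. Then for every r ∈ U and all indices 1 ≤ i, j ≤ 2n, ω(∂x/∂r_i(r), ∂y/∂r_j(r)) = ω(∂x/∂r_j(r), ∂y/∂r_i(r)). -/
lemma clm_eq_sum {ι : Type*} [Fintype ι] [DecidableEq ι]
    (ψ : (ι → ℝ) →L[ℝ] ℝ) (a : ι → ℝ) :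
    ψ a = ∑ k, a k * ψ (Pi.single k 1) := by
  have ha : a = ∑ k, a k • (Pi.single k 1 : ι → ℝ) := by
    funext j
    simp [Finset.sum_apply, Pi.single_apply]
  conv_lhs => rw [ha]
  rw [map_sum]
  simp [smul_eq_mul]

/-- The standard symplectic form on `ℝ^{2n}`, indexed by `Fin n ⊕ Fin n`. -/
noncomputable def sform (n : ℕ) (u v : Fin n ⊕ Fin n → ℝ) : ℝ :=
  ∑ i : Fin n, (u (Sum.inl i) * v (Sum.inr i) - u (Sum.inr i) * v (Sum.inl i))

/-- The Hamiltonian vector field of `F`. -/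
noncomputable def hamVF (n : ℕ) (F : (Fin n ⊕ Fin n → ℝ) → ℝ) (x : Fin n ⊕ Fin n → ℝ) :
    Fin n ⊕ Fin n → ℝ :=
  Sum.elim (fun i => -(fderiv ℝ F x (Pi.single (Sum.inr i) 1)))
    (fun i => fderiv ℝ F x (Pi.single (Sum.inl i) 1))

theorem stmt3 (n : ℕ) (hn : 1 ≤ n)
    (V U : Set (Fin n ⊕ Fin n → ℝ)) (hV : IsOpen V) (hU : IsOpen U)
    (F : (Fin n ⊕ Fin n → ℝ) → ℝ) (hF : ContDiffOn ℝ 2 F V)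
    (x : (Fin n ⊕ Fin n → ℝ) → (Fin n ⊕ Fin n → ℝ)) (hx : ContDiffOn ℝ 1 x U)
    (hxV : ∀ r ∈ U, x r ∈ V)
    (y : (Fin n ⊕ Fin n → ℝ) → (Fin n ⊕ Fin n → ℝ)) (hy : y = (hamVF n F) ∘ x) :
    ∀ r ∈ U, ∀ i j : Fin n ⊕ Fin n,
      sform n (fderiv ℝ x r (Pi.single i 1)) (fderiv ℝ y r (Pi.single j 1)) =
        sform n (fderiv ℝ x r (Pi.single j 1)) (fderiv ℝ y r (Pi.single i 1)) := by
  intro r hr i j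
  have hxd : DifferentiableAt ℝ x r :=
    (hx.contDiffAt (hU.mem_nhds hr)).differentiableAt one_ne_zero
  have hFc : ContDiffAt ℝ 2 F (x r) := hF.contDiffAt (hV.mem_nhds (hxV r hr))
  have hΦ : DifferentiableAt ℝ (fderiv ℝ F) (x r) :=
    (hFc.fderiv_right (m := 1) (by norm_num)).differentiableAt one_ne_zero
 
  set D : (Fin n ⊕ Fin n → ℝ) →L[ℝ] (Fin n ⊕ Fin n → ℝ) := fderiv ℝ x r with hD
  set H : (Fin n ⊕ Fin n → ℝ) →L[ℝ] (Fin n ⊕ Fin n → ℝ) →L[ℝ] ℝ := fderiv ℝ (fderiv ℝ F) (x r) with hH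
  have hsymm : ∀ u v, H u v = H v u := fun u v => hFc.isSymmSndFDerivAt (by simp) u v
  -- derivative of r ↦ fderiv F (x r)
  have hΦx : HasFDerivAt (fun r' => fderiv ℝ F (x r')) (H.comp D) r :=
    hΦ.hasFDerivAt.comp r hxd.hasFDerivAt
  -- derivative of y
  set L : (Fin n ⊕ Fin n → ℝ) →L[ℝ] (Fin n ⊕ Fin n → ℝ) :=
    ContinuousLinearMap.pi (fun k => Sum.elim
      (fun i' => -((ContinuousLinearMap.apply ℝ ℝ (Pi.single (Sum.inr i') 1)).comp (H.comp D)))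
      (fun i' => (ContinuousLinearMap.apply ℝ ℝ (Pi.single (Sum.inl i') 1)).comp (H.comp D)) k)
    with hL
  have hyd : HasFDerivAt y L r := by
    rw [hy]
    have : (hamVF n F ∘ x) = fun r' k => Sum.elim
        (fun i' => -(fderiv ℝ F (x r') (Pi.single (Sum.inr i') 1)))
        (fun i' => fderiv ℝ F (x r') (Pi.single (Sum.inl i') 1)) k := by
      funext r' k
      rfl
    rw [this]
    apply hasFDerivAt_pi.2
    intro k
    cases k with
    | inl i' =>
      exact (((ContinuousLinearMap.apply ℝ ℝ (Pi.single (Sum.inr i') 1)).hasFDerivAt.comp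
        r hΦx)).neg
    | inr i' =>
      exact ((ContinuousLinearMap.apply ℝ ℝ (Pi.single (Sum.inl i') 1)).hasFDerivAt.comp r hΦx)
  have hfd : fderiv ℝ y r = L := hyd.fderiv
  have key : ∀ a b : (Fin n ⊕ Fin n → ℝ), sform n (D a) (L b) = H (D b) (D a) := by
    intro a b
    have hcomp : ∀ k : Fin n ⊕ Fin n,
        (L b) k = Sum.elim
          (fun i' => -(H (D b) (Pi.single (Sum.inr i') 1)))
          (fun i' => H (D b) (Pi.single (Sum.inl i') 1)) k := by
      intro k; cases k <;> rfl
    rw [clm_eq_sum (H (D b)) (D a), Fintype.sum_sum_type]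
    unfold sform
    rw [← Finset.sum_add_distrib]
    apply Finset.sum_congr rfl
    intro i' _
    rw [hcomp (Sum.inl i'), hcomp (Sum.inr i')]
    simp
  rw [hfd]
  have e1 : fderiv ℝ x r (Pi.single i 1) = D (Pi.single i 1) := rfl
  have e2 : fderiv ℝ x r (Pi.single j 1) = D (Pi.single j 1) := rfl
  rw [e1, e2, key, key, hsymm]
end

section
/- Let m, N ≥ 1, let U ⊆ ℝ^m be open, let A : U → GL(N, ℝ) be C¹, and let Γ_k : U → M_N(ℝ) (1 ≤ k ≤ m) be matrix fields. Define Γ̄_k := A^{-1}·Γ_k·A + A^{-1}·∂_k A and Γ̂_k := (Γ_k + Γ̄_k)/2. If for every k and every point of U one has ∂_k(A²) + Γ_k·A² − A²·Γ_k = 0 (i.e. A² is parallel with respect to ∇), then for every k and every point of U, ∂_k A + Γ̂_k·A − A·Γ̂_k = 0 (i.e. A is parallel with respect to the metric connection ∇̂ = (∇ + ∇̄)/2). -/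
open Matrix

/-- Entrywise partial derivative `∂_k` of a matrix-valued map. -/
noncomputable def pderM {ι κ κ' : Type*} [Fintype ι] [DecidableEq ι] (k : ι)
    (M : (ι → ℝ) → Matrix κ κ' ℝ) (r : ι → ℝ) : Matrix κ κ' ℝ :=
  Matrix.of fun i j => fderiv ℝ (fun r' => M r' i j) r (Pi.single k 1)

theorem stmt7 (m N : ℕ) (hm : 1 ≤ m) (hN : 1 ≤ N)
    (U : Set (Fin m → ℝ)) (hU : IsOpen U)
    (A : (Fin m → ℝ) → Matrix (Fin N) (Fin N) ℝ)
    (hA : ∀ i j : Fin N, ContDiffOn ℝ 1 (fun r => A r i j) U) (hAinv : ∀ r ∈ U, IsUnit (A r).det)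
    (Γ Γbar Γhat : Fin m → (Fin m → ℝ) → Matrix (Fin N) (Fin N) ℝ)
    (hΓbar : ∀ k r, Γbar k r = (A r)⁻¹ * Γ k r * A r + (A r)⁻¹ * pderM k A r)
    (hΓhat : ∀ k r, Γhat k r = (1 / 2 : ℝ) • (Γ k r + Γbar k r))
    (hpar : ∀ k : Fin m, ∀ r ∈ U,
      pderM k (fun r' => A r' * A r') r + Γ k r * (A r * A r) - (A r * A r) * Γ k r = 0) :
    ∀ k : Fin m, ∀ r ∈ U,
      pderM k A r + Γhat k r * A r - A r * Γhat k r = 0 := by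
  intro k r hr
  have hdet := hAinv r hr
  have hdiff : ∀ i j, DifferentiableAt ℝ (fun r' => A r' i j) r := fun i j =>
    ((hA i j).differentiableOn one_ne_zero).differentiableAt (hU.mem_nhds hr)
  have hprod : pderM k (fun r' => A r' * A r') r
      = pderM k A r * A r + A r * pderM k A r := by
    ext i j
    simp only [pderM, Matrix.of_apply, Matrix.add_apply, Matrix.mul_apply]
    rw [fderiv_fun_sum (u := Finset.univ) (A := fun l r' => A r' i l * A r' l j) (fun l _ => ((hdiff i l).fun_mul (hdiff l j)))]
    simp [ContinuousLinearMap.sum_apply, fderiv_fun_mul (hdiff _ _) (hdiff _ _),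
      Finset.sum_add_distrib, mul_comm]
    abel
  set a := A r
  set b := (A r)⁻¹
  set d := pderM k A r
  set g := Γ k r
  have hp := hpar k r hr
  rw [hprod] at hp
  have key : a * (d + Γhat k r * a - a * Γhat k r) = 0 := by
    rw [hΓhat, hΓbar]
    have : a * (d + (1 / 2 : ℝ) • (g + (b * g * a + b * d)) * a
        - a * ((1 / 2 : ℝ) • (g + (b * g * a + b * d))))
        = (1 / 2 : ℝ) • (d * a + a * d + g * (a * a) - a * a * g) := by
      simp only [mul_add, add_mul, mul_sub, sub_mul, smul_add, smul_sub,
        mul_smul_comm, smul_mul_assoc, mul_assoc,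
        Matrix.mul_nonsing_inv_cancel_left _ _ hdet, a, b]
      module
    rw [this]
    have hp' : d * a + a * d + g * (a * a) - a * a * g = 0 := by
      rw [← hp]
    rw [hp', smul_zero]
  calc d + Γhat k r * a - a * Γhat k r
      = b * (a * (d + Γhat k r * a - a * Γhat k r)) := by
        rw [← mul_assoc, Matrix.nonsing_inv_mul _ hdet, one_mul]
    _ = 0 := by rw [key, mul_zero]
end

section
/- Let n ≥ 1, let U₁, U₂ ⊆ ℝⁿ be open, and let β : U₁ → ℝ^{2n} and γ : U₂ → ℝ^{2n} be C² Lagrangian maps, i.e. ω(∂β/∂s_i, ∂β/∂s_j) = 0 and ω(∂γ/∂t_i, ∂γ/∂t_j) = 0 for all i, j. Define x(s,t) := (β(s) + γ(t))/2 and y(s,t) := (γ(t) − β(s))/2 on U := U₁ × U₂. Fix (s,t) ∈ U and assume the transversality condition: the vectors ∂β/∂s_1(s), …, ∂β/∂s_n(s), ∂γ/∂t_1(t), …, ∂γ/∂t_n(t) span ℝ^{2n}. Then: (i) the Jacobian Dx(s,t) (with respect to the coordinates (s,t)) is invertible; (ii) ∂y/∂s_i = −∂x/∂s_i and ∂y/∂t_j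 = ∂x/∂t_j for all i, j, i.e. Dy(s,t) = Dx(s,t)·K_{2n}; (iii) the symmetric matrix h with entries h(e_i, e_j) = ω(∂x/∂r_i, ∂y/∂r_j) (r = (s,t)) satisfies ω(∂x/∂s_i, ∂y/∂s_j) = 0, ω(∂x/∂t_i, ∂y/∂t_j) = 0 and ω(∂x/∂s_i, ∂y/∂t_j) = (1/4)·ω(∂β/∂s_i(s), ∂γ/∂t_j(t)) for all i, j. (This is the center-chord improper affine sphere construction: det(Dy·Dx^{-1}) = det K_{2n} = (−1)ⁿ is constant.) -/
open Matrix

/-- The matrix `K_{2n} = [[−I_n, 0], [0, I_n]]`. -/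
noncomputable def Kmat (n : ℕ) : Matrix (Fin n ⊕ Fin n) (Fin n ⊕ Fin n) ℝ :=
  Matrix.fromBlocks (-1) 0 0 1

/-- The Jacobian matrix of a map between finite-dimensional coordinate spaces. -/
noncomputable def jacM {ι κ : Type*} [Fintype ι] [DecidableEq ι] [Fintype κ]
    (g : (ι → ℝ) → (κ → ℝ)) (r : ι → ℝ) : Matrix κ ι ℝ :=
  Matrix.of fun i j => fderiv ℝ g r (Pi.single j 1) i

lemma sform_smul_smul (n : ℕ) (a b : ℝ) (u v : Fin n ⊕ Fin n → ℝ) :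
    sform n (a • u) (b • v) = (a * b) * sform n u v := by
  simp only [sform, Pi.smul_apply, smul_eq_mul, Finset.mul_sum]
  exact Finset.sum_congr rfl fun i _ => by ring

/-- Projection onto the first block of coordinates. -/
noncomputable def Pl (n : ℕ) : ((Fin n ⊕ Fin n) → ℝ) →L[ℝ] (Fin n → ℝ) :=
  ContinuousLinearMap.pi fun i => ContinuousLinearMap.proj (Sum.inl i)

/-- Projection onto the second block of coordinates. -/
noncomputable def Pr (n : ℕ) : ((Fin n ⊕ Fin n) → ℝ) →L[ℝ] (Fin n → ℝ) :=
  ContinuousLinearMap.pi fun i => ContinuousLinearMap.proj (Sum.inr i)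

lemma Pl_single_inl {n : ℕ} (i : Fin n) : Pl n (Pi.single (Sum.inl i) 1) = Pi.single i 1 := by
  funext k
  simp [Pl, ContinuousLinearMap.pi_apply, Pi.single_apply, Sum.inl.injEq]

lemma Pr_single_inl {n : ℕ} (i : Fin n) : Pr n (Pi.single (Sum.inl i) 1) = 0 := by
  funext k; simp [Pr, ContinuousLinearMap.pi_apply, Pi.single_apply]

lemma Pl_single_inr {n : ℕ} (i : Fin n) : Pl n (Pi.single (Sum.inr i) 1) = 0 := by
  funext k; simp [Pl, ContinuousLinearMap.pi_apply, Pi.single_apply]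

lemma Pr_single_inr {n : ℕ} (i : Fin n) : Pr n (Pi.single (Sum.inr i) 1) = Pi.single i 1 := by
  funext k
  simp [Pr, ContinuousLinearMap.pi_apply, Pi.single_apply, Sum.inr.injEq]

theorem stmt10 (n : ℕ) (hn : 1 ≤ n)
    (U₁ U₂ : Set (Fin n → ℝ)) (hU₁ : IsOpen U₁) (hU₂ : IsOpen U₂)
    (β γ : (Fin n → ℝ) → (Fin n ⊕ Fin n → ℝ))
    (hβ : ContDiffOn ℝ 2 β U₁) (hγ : ContDiffOn ℝ 2 γ U₂)
    -- `β` and `γ` are Lagrangian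
    (hβL : ∀ s ∈ U₁, ∀ i j : Fin n,
      sform n (fderiv ℝ β s (Pi.single i 1)) (fderiv ℝ β s (Pi.single j 1)) = 0)
    (hγL : ∀ t ∈ U₂, ∀ i j : Fin n,
      sform n (fderiv ℝ γ t (Pi.single i 1)) (fderiv ℝ γ t (Pi.single j 1)) = 0)
    -- the center `x` and mid-chord `y`, as functions of `r = (s,t)`
    (x y : (Fin n ⊕ Fin n → ℝ) → (Fin n ⊕ Fin n → ℝ))
    (hxdef : ∀ r, x r = (1 / 2 : ℝ) • (β (r ∘ Sum.inl) + γ (r ∘ Sum.inr)))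
    (hydef : ∀ r, y r = (1 / 2 : ℝ) • (γ (r ∘ Sum.inr) - β (r ∘ Sum.inl)))
    -- a fixed point `(s,t) ∈ U₁ × U₂`
    (s t : Fin n → ℝ) (hs : s ∈ U₁) (ht : t ∈ U₂)
    -- transversality: the tangent vectors of `β` at `s` and of `γ` at `t` span `ℝ^{2n}`
    (htrans : Submodule.span ℝ
      ((Set.range fun i : Fin n => fderiv ℝ β s (Pi.single i 1)) ∪
        (Set.range fun j : Fin n => fderiv ℝ γ t (Pi.single j 1))) = ⊤) :
    -- (i) the Jacobian of `x` at `r = (s,t)` is invertible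
    IsUnit (jacM x (Sum.elim s t)).det ∧
    -- (ii) `∂y/∂s_i = −∂x/∂s_i`, `∂y/∂t_j = ∂x/∂t_j`, i.e. `Dy = Dx · K_{2n}`
    (∀ i : Fin n,
      fderiv ℝ y (Sum.elim s t) (Pi.single (Sum.inl i) 1) =
        -fderiv ℝ x (Sum.elim s t) (Pi.single (Sum.inl i) 1)) ∧
    (∀ j : Fin n,
      fderiv ℝ y (Sum.elim s t) (Pi.single (Sum.inr j) 1) =
        fderiv ℝ x (Sum.elim s t) (Pi.single (Sum.inr j) 1)) ∧
    jacM y (Sum.elim s t) = jacM x (Sum.elim s t) * Kmat n ∧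
    -- (iii) the Blaschke metric `h`
    (∀ i j : Fin n,
      sform n (fderiv ℝ x (Sum.elim s t) (Pi.single (Sum.inl i) 1))
        (fderiv ℝ y (Sum.elim s t) (Pi.single (Sum.inl j) 1)) = 0) ∧
    (∀ i j : Fin n,
      sform n (fderiv ℝ x (Sum.elim s t) (Pi.single (Sum.inr i) 1))
        (fderiv ℝ y (Sum.elim s t) (Pi.single (Sum.inr j) 1)) = 0) ∧
    (∀ i j : Fin n,
      sform n (fderiv ℝ x (Sum.elim s t) (Pi.single (Sum.inl i) 1))
        (fderiv ℝ y (Sum.elim s t) (Pi.single (Sum.inr j) 1)) =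
      (1 / 4 : ℝ) * sform n (fderiv ℝ β s (Pi.single i 1)) (fderiv ℝ γ t (Pi.single j 1))) := by
  set r₀ : Fin n ⊕ Fin n → ℝ := Sum.elim s t with hr₀
  have hβd : DifferentiableAt ℝ β s :=
    (hβ.contDiffAt (hU₁.mem_nhds hs)).differentiableAt (by norm_num)
  have hγd : DifferentiableAt ℝ γ t :=
    (hγ.contDiffAt (hU₂.mem_nhds ht)).differentiableAt (by norm_num)
  have hPl : Pl n r₀ = s := rfl
  have hPr : Pr n r₀ = t := rfl
  have h1 : HasFDerivAt (fun r => β (Pl n r)) ((fderiv ℝ β s).comp (Pl n)) r₀ :=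
    (hPl ▸ hβd.hasFDerivAt).comp _ (Pl n).hasFDerivAt
  have h2 : HasFDerivAt (fun r => γ (Pr n r)) ((fderiv ℝ γ t).comp (Pr n)) r₀ :=
    (hPr ▸ hγd.hasFDerivAt).comp _ (Pr n).hasFDerivAt
  have hx : HasFDerivAt x
      ((1/2 : ℝ) • ((fderiv ℝ β s).comp (Pl n) + (fderiv ℝ γ t).comp (Pr n))) r₀ := by
    have := (h1.add h2).const_smul (1/2 : ℝ)
    have hf : x = (1/2 : ℝ) • ((fun r => β (Pl n r)) + fun r => γ (Pr n r)) := funext fun r => hxdef r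
    rw [hf]; exact this
  have hy : HasFDerivAt y
      ((1/2 : ℝ) • ((fderiv ℝ γ t).comp (Pr n) - (fderiv ℝ β s).comp (Pl n))) r₀ := by
    have := (h2.sub h1).const_smul (1/2 : ℝ)
    have hf : y = (1/2 : ℝ) • ((fun r => γ (Pr n r)) - fun r => β (Pl n r)) := funext fun r => hydef r
    rw [hf]; exact this
  -- evaluation of the derivatives on basis vectors
  have hx1 : ∀ i : Fin n, fderiv ℝ x r₀ (Pi.single (Sum.inl i) 1)
      = (1/2 : ℝ) • fderiv ℝ β s (Pi.single i 1) := by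
    intro i
    rw [hx.fderiv]
    simp [Pl_single_inl, Pr_single_inl]
  have hx2 : ∀ j : Fin n, fderiv ℝ x r₀ (Pi.single (Sum.inr j) 1)
      = (1/2 : ℝ) • fderiv ℝ γ t (Pi.single j 1) := by
    intro j
    rw [hx.fderiv]
    simp [Pl_single_inr, Pr_single_inr]
  have hy1 : ∀ i : Fin n, fderiv ℝ y r₀ (Pi.single (Sum.inl i) 1)
      = (-(1/2) : ℝ) • fderiv ℝ β s (Pi.single i 1) := by
    intro i
    rw [hy.fderiv]
    simp [Pl_single_inl, Pr_single_inl]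
  have hy2 : ∀ j : Fin n, fderiv ℝ y r₀ (Pi.single (Sum.inr j) 1)
      = (1/2 : ℝ) • fderiv ℝ γ t (Pi.single j 1) := by
    intro j
    rw [hy.fderiv]
    simp [Pl_single_inr, Pr_single_inr]
  refine ⟨?_, ?_, ?_, ?_, ?_, ?_, ?_⟩
  · -- invertibility of jacM x
    set M := jacM x r₀ with hM
    have hcol : ∀ k, Matrix.toLin' M (Pi.single k 1) = fderiv ℝ x r₀ (Pi.single k 1) := by
      intro k
      funext i
      simp [Matrix.toLin'_apply, Matrix.mulVec_single, hM, jacM]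
    have hsurj : Function.Surjective (Matrix.toLin' M) := by
      rw [← LinearMap.range_eq_top]
      rw [eq_top_iff, ← htrans]
      apply Submodule.span_le.2
      rintro v (⟨i, rfl⟩ | ⟨j, rfl⟩)
      · show fderiv ℝ β s (Pi.single i 1) ∈ LinearMap.range (Matrix.toLin' M)
        have : fderiv ℝ β s (Pi.single i 1)
            = (2 : ℝ) • Matrix.toLin' M (Pi.single (Sum.inl i) 1) := by
          rw [hcol, hx1]; rw [smul_smul]; norm_num
        rw [this]
        exact Submodule.smul_mem _ _ (LinearMap.mem_range_self _ _)
      · show fderiv ℝ γ t (Pi.single j 1) ∈ LinearMap.range (Matrix.toLin' M)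
        have : fderiv ℝ γ t (Pi.single j 1)
            = (2 : ℝ) • Matrix.toLin' M (Pi.single (Sum.inr j) 1) := by
          rw [hcol, hx2]; rw [smul_smul]; norm_num
        rw [this]
        exact Submodule.smul_mem _ _ (LinearMap.mem_range_self _ _)
    have hinj : Function.Injective (Matrix.toLin' M) :=
      LinearMap.injective_iff_surjective.2 hsurj
    have hu := LinearEquiv.isUnit_det' (LinearEquiv.ofBijective (Matrix.toLin' M) ⟨hinj, hsurj⟩)
    have hd : LinearMap.det
        ((LinearEquiv.ofBijective (Matrix.toLin' M) ⟨hinj, hsurj⟩ :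
          (Fin n ⊕ Fin n → ℝ) ≃ₗ[ℝ] (Fin n ⊕ Fin n → ℝ)) :
          (Fin n ⊕ Fin n → ℝ) →ₗ[ℝ] (Fin n ⊕ Fin n → ℝ)) = M.det := by
      rw [← LinearMap.det_toLin' M]; rfl
    rwa [hd] at hu
  · intro i
    rw [hy1, hx1, neg_smul]
  · intro j
    rw [hy2, hx2]
  · ext k l
    cases l with
    | inl j =>
      simp [jacM, Kmat, Matrix.mul_apply, Fintype.sum_sum_type, hy1, hx1,
        Pi.smul_apply, Matrix.one_apply, mul_ite, Finset.sum_ite_eq']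
    | inr j =>
      simp [jacM, Kmat, Matrix.mul_apply, Fintype.sum_sum_type, hy2, hx2,
        Pi.smul_apply, Matrix.one_apply, mul_ite, Finset.sum_ite_eq']
  · intro i j
    rw [hx1, hy1, sform_smul_smul, hβL s hs i j, mul_zero]
  · intro i j
    rw [hx2, hy2, sform_smul_smul, hγL t ht i j, mul_zero]
  · intro i j
    rw [hx1, hy2, sform_smul_smul]
    norm_num
end

section
/- Let n ≥ 1, let U ⊆ ℂⁿ be open, let H : U → ℂ be holomorphic, define Q(s,t) := Im H(s + it) on W := {(s,t) ∈ ℝⁿ × ℝⁿ : s + it ∈ U}, and set x(s,t) := (s, ∂Q/∂t(s,t)), y(s,t) := (t, ∂Q/∂s(s,t)). Define η := x + i·y : W → ℂ^{2n}. Then: (i) η satisfies the Cauchy–Riemann equations ∂η/∂t_j = i·∂η/∂s_j on W for every j (so η is a holomorphic function of z = s + it); and (ii) the image of η is Lagrangian for the complex-bilinear extension ω_ℂ of ω: for all j, k and all points of W, ω_ℂ(∂η/∂s_j, ∂η/∂s_k) = 0. (This expresses that special improper affine spheres arise from the rotated center-chord transform of a pair of complex conjugate Lagrangian submanifolds.)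 -/
section AuxOsgood

open Metric Complex MeasureTheory intervalIntegral

variable {D : Type*} [NormedAddCommGroup D] [NormedSpace ℂ D]

lemma hasDerivAt_slice {f : D → ℂ} {z v : D} {θ₀ : ℂ}
    (hf : DifferentiableAt ℂ f (z + θ₀ • v)) :
    HasDerivAt (fun θ : ℂ => f (z + θ • v)) (fderiv ℂ f (z + θ₀ • v) v) θ₀ := by
  have h1 : HasDerivAt (fun θ : ℂ => z + θ • v) v θ₀ := by
    simpa using (((hasDerivAt_id θ₀).smul_const v).const_add z)
  exact hf.hasFDerivAt.comp_hasDerivAt θ₀ h1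

lemma norm_fderiv_le_of_bound {f : D → ℂ} {U : Set D} (hU : IsOpen U)
    (hf : DifferentiableOn ℂ f U) {z : D} {ρ M : ℝ} (hρ : 0 < ρ)
    (hz : closedBall z ρ ⊆ U) (hM : ∀ w ∈ closedBall z ρ, ‖f w‖ ≤ M) :
    ‖fderiv ℂ f z‖ ≤ M / ρ := by
  have hM0 : 0 ≤ M := le_trans (norm_nonneg _) (hM z (mem_closedBall_self hρ.le))
  refine ContinuousLinearMap.opNorm_le_bound _ (div_nonneg hM0 hρ.le) fun v => ?_
  rcases eq_or_ne v 0 with rfl | hv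
  · simp
  have hvn : 0 < ‖v‖ := norm_pos_iff.2 hv
  set r : ℝ := ρ / ‖v‖ with hr
  have hr0 : 0 < r := div_pos hρ hvn
  set s : ℂ → ℂ := fun θ => f (z + θ • v) with hs
  have hmem : ∀ θ : ℂ, θ ∈ closedBall (0:ℂ) r → z + θ • v ∈ closedBall z ρ := by
    intro θ hθ
    simp only [mem_closedBall, dist_self_add_left] at hθ ⊢
    rw [norm_smul]
    calc ‖θ‖ * ‖v‖ ≤ r * ‖v‖ := by
          apply mul_le_mul_of_nonneg_right _ hvn.le
          simpa using hθ
      _ = ρ := by rw [hr, div_mul_cancel₀ _ hvn.ne']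
  have hsd : DifferentiableOn ℂ s (closedBall (0:ℂ) r) := by
    intro θ hθ
    have : DifferentiableAt ℂ s θ := by
      have h1 : DifferentiableAt ℂ f (z + θ • v) :=
        hf.differentiableAt (hU.mem_nhds (hz (hmem θ hθ)))
      exact h1.comp θ (((differentiable_id.smul_const v).const_add z) θ)
    exact this.differentiableWithinAt
  have hdc : DiffContOnCl ℂ s (ball (0:ℂ) r) := by
    apply DifferentiableOn.diffContOnCl
    rwa [closure_ball (0:ℂ) hr0.ne']
  have hC : ∀ θ ∈ sphere (0:ℂ) r, ‖s θ‖ ≤ M := fun θ hθ =>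
    hM _ (hmem θ (sphere_subset_closedBall hθ))
  have hkey : ‖deriv s 0‖ ≤ M / r :=
    Complex.norm_deriv_le_of_forall_mem_sphere_norm_le hr0 hdc hC
  have hds : deriv s 0 = fderiv ℂ f z v := by
    have h1 : DifferentiableAt ℂ f (z + (0:ℂ) • v) := by
      simpa using hf.differentiableAt (hU.mem_nhds (hz (mem_closedBall_self hρ.le)))
    have h2 := (hasDerivAt_slice (v := v) h1).deriv
    simp only [zero_smul, add_zero] at h2
    exact h2
  rw [hds] at hkey
  calc ‖fderiv ℂ f z v‖ ≤ M / r := hkey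
    _ = M / ρ * ‖v‖ := by rw [hr, div_div_eq_mul_div, mul_div_right_comm]

variable [FiniteDimensional ℂ D] [MeasurableSpace D] [BorelSpace D]

/-- Osgood-type regularity: a directional derivative of a holomorphic function of several
complex variables is holomorphic. -/
lemma differentiableAt_fderiv_apply {f : D → ℂ} {U : Set D} (hU : IsOpen U)
    (hf : DifferentiableOn ℂ f U) {z₀ : D} (hz₀ : z₀ ∈ U) {v : D} (hv : ‖v‖ ≤ 1) :
    DifferentiableAt ℂ (fun z => fderiv ℂ f z v) z₀ := by
  obtain ⟨ε, hε0, hεU⟩ : ∃ ε > 0, closedBall z₀ ε ⊆ U := by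
    rcases Metric.isOpen_iff.1 hU z₀ hz₀ with ⟨ε, h1, h2⟩
    exact ⟨ε/2, by positivity, (closedBall_subset_ball (by linarith)).trans h2⟩
  set R : ℝ := ε / 3 with hRdef
  have hR0 : 0 < R := by positivity
  have hRU : closedBall z₀ (3*R) ⊆ U := by
    have : 3*R = ε := by rw [hRdef]; ring
    rwa [this]
  obtain ⟨M, hM⟩ : ∃ M, ∀ w ∈ closedBall z₀ (3*R), ‖f w‖ ≤ M :=
    (isCompact_closedBall _ _).exists_bound_of_continuousOn (hf.continuousOn.mono hRU)
  -- uniform bound on the gradient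
  have hfb : ∀ w ∈ closedBall z₀ (2*R), ‖fderiv ℂ f w‖ ≤ M / R := by
    intro w hw
    rw [mem_closedBall] at hw
    have hsub : closedBall w R ⊆ closedBall z₀ (3*R) :=
      closedBall_subset_closedBall' (by linarith)
    exact norm_fderiv_le_of_bound hU hf hR0 (hsub.trans hRU) fun y hy => hM y (hsub hy)
  set c : ℝ → ℂ := fun θ => deriv (circleMap 0 R) θ * ((circleMap 0 R θ) ^ 2)⁻¹ with hcdef
  set F : D → ℝ → ℂ := fun z θ => c θ * f (z + circleMap 0 R θ • v) with hFdef
  set F' : D → ℝ → D →L[ℂ] ℂ :=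
    (fun z θ => c θ • fderiv ℂ f (z + circleMap 0 R θ • v)) with hF'def
  have hmemz : ∀ z ∈ ball z₀ R, ∀ θ : ℝ, z + circleMap 0 R θ • v ∈ closedBall z₀ (2*R) := by
    intro z hz θ
    rw [mem_closedBall]
    have h1 : dist (z + circleMap 0 R θ • v) z₀ ≤ ‖circleMap 0 R θ • v‖ + dist z z₀ := by
      have := dist_triangle (z + circleMap 0 R θ • v) z z₀
      simpa [dist_eq_norm, add_sub_cancel_left] using this
    have h2 : ‖circleMap 0 R θ • v‖ ≤ R := by
      rw [norm_smul]
      have : ‖circleMap 0 R θ‖ = R := by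
        simp [norm_circleMap_zero, abs_of_pos hR0]
      rw [this]
      calc R * ‖v‖ ≤ R * 1 := by
            exact mul_le_mul_of_nonneg_left hv hR0.le
        _ = R := mul_one R
    have h3 : dist z z₀ ≤ R := (mem_ball.1 hz).le
    linarith
  have hc_cont : Continuous c := by
    have h1 : Continuous fun θ : ℝ => deriv (circleMap 0 R) θ := by
      simp only [deriv_circleMap]
      exact (continuous_circleMap 0 R).mul continuous_const
    refine h1.mul (Continuous.inv₀ ((continuous_circleMap 0 R).pow 2) fun θ => ?_)
    exact pow_ne_zero _ (circleMap_ne_center hR0.ne')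
  have hcnorm : ∀ θ : ℝ, ‖c θ‖ = R⁻¹ := by
    intro θ
    rw [hcdef]
    simp only [deriv_circleMap, norm_mul, norm_inv, norm_pow,
      norm_circleMap_zero, abs_of_pos hR0, Complex.norm_I]
    field_simp
  have hcont_slice : ∀ z ∈ ball z₀ R, Continuous (F z) := by
    intro z hz
    apply hc_cont.mul
    apply (hf.continuousOn.mono hRU).comp_continuous
    · exact continuous_const.add ((continuous_circleMap 0 R).smul continuous_const)
    · exact fun θ => closedBall_subset_closedBall (by linarith) (hmemz z hz θ)
  have hdiff : ∀ θ : ℝ, ∀ z ∈ ball z₀ R, HasFDerivAt (fun w => F w θ) (F' z θ) z := by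
    intro θ z hz
    have hmem : z + circleMap 0 R θ • v ∈ U :=
      hRU (closedBall_subset_closedBall (by linarith) (hmemz z hz θ))
    have h2 := (hf.differentiableAt (hU.mem_nhds hmem)).hasFDerivAt
    have h3 : HasFDerivAt (fun w : D => w + circleMap 0 R θ • v)
        (ContinuousLinearMap.id ℂ D) z := (hasFDerivAt_id z).add_const _
    have h1 : HasFDerivAt (fun w : D => f (w + circleMap 0 R θ • v))
        (fderiv ℂ f (z + circleMap 0 R θ • v)) z := by
      simpa [Function.comp_def] using h2.comp z h3
    simpa [hFdef, hF'def, smul_eq_mul] using h1.fun_const_smul (c θ)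
  have hbound : ∀ θ : ℝ, ∀ z ∈ ball z₀ R, ‖F' z θ‖ ≤ R⁻¹ * (M / R) := by
    intro θ z hz
    have hn : ‖F' z θ‖ = ‖c θ‖ * ‖fderiv ℂ f (z + circleMap 0 R θ • v)‖ :=
      norm_smul (c θ) (fderiv ℂ f (z + circleMap 0 R θ • v))
    rw [hn, hcnorm θ]
    exact mul_le_mul_of_nonneg_left (hfb _ (hmemz z hz θ)) (by positivity)
  have key : HasFDerivAt (fun z => ∫ θ in (0:ℝ)..2*Real.pi, F z θ)
      (∫ θ in (0:ℝ)..2*Real.pi, F' z₀ θ) z₀ := by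
    apply intervalIntegral.hasFDerivAt_integral_of_dominated_of_fderiv_le
      (bound := fun _ => R⁻¹ * (M / R)) (ball_mem_nhds z₀ hR0)
    · filter_upwards [ball_mem_nhds z₀ hR0] with z hz using
        (hcont_slice z hz).aestronglyMeasurable
    · exact (hcont_slice z₀ (mem_ball_self hR0)).intervalIntegrable 0 (2*Real.pi)
    · -- measurability of F' z₀
      have m1 : Measurable fun θ : ℝ => fderiv ℂ f (z₀ + circleMap 0 R θ • v) := by
        apply (measurable_fderiv ℂ f).comp
        exact (continuous_const.add ((continuous_circleMap 0 R).smul continuous_const)).measurable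
      exact (hc_cont.aestronglyMeasurable.smul m1.aestronglyMeasurable)
    · exact MeasureTheory.ae_of_all _ fun θ _ z hz => hbound θ z hz
    · exact intervalIntegrable_const
    · exact MeasureTheory.ae_of_all _ fun θ _ z hz => hdiff θ z hz
  have hrep : ∀ z ∈ ball z₀ R, fderiv ℂ f z v =
      (2*Real.pi*Complex.I : ℂ)⁻¹ • ∫ θ in (0:ℝ)..2*Real.pi, F z θ := by
    intro z hz
    have hVopen : IsOpen {w : ℂ | z + w • v ∈ U} :=
      hU.preimage (continuous_const.add (continuous_id.smul continuous_const))
    have hsub : closedBall (0:ℂ) R ⊆ {w : ℂ | z + w • v ∈ U} := by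
      intro w hw
      simp only [mem_closedBall, dist_zero_right] at hw
      have : dist (z + w • v) z₀ ≤ 2*R := by
        have h1 : dist (z + w • v) z₀ ≤ ‖w • v‖ + dist z z₀ := by
          have := dist_triangle (z + w • v) z z₀
          simpa [dist_eq_norm, add_sub_cancel_left] using this
        have h2 : ‖w • v‖ ≤ R := by
          rw [norm_smul]
          calc ‖w‖ * ‖v‖ ≤ R * 1 := mul_le_mul hw hv (norm_nonneg _) hR0.le
            _ = R := mul_one R
        have h3 : dist z z₀ ≤ R := (mem_ball.1 hz).le
        linarith
      exact hRU (closedBall_subset_closedBall (by linarith) (mem_closedBall.2 this))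
    have hsd : DifferentiableOn ℂ (fun w : ℂ => f (z + w • v)) {w : ℂ | z + w • v ∈ U} :=
      fun w hw => ((hf.differentiableAt (hU.mem_nhds hw)).comp w
        (((differentiable_id.smul_const v).const_add z) w)).differentiableWithinAt
    have hcau := Complex.two_pi_I_inv_smul_circleIntegral_sub_sq_inv_smul_of_differentiable
      hVopen hsub hsd (mem_ball_self hR0)
    have hder : deriv (fun w : ℂ => f (z + w • v)) 0 = fderiv ℂ f z v := by
      have h1 : DifferentiableAt ℂ f (z + (0:ℂ) • v) := by
        simpa using hf.differentiableAt (hU.mem_nhds (hsub (mem_closedBall_self hR0.le)))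
      have h2 := (hasDerivAt_slice (v := v) h1).deriv
      simp only [zero_smul, add_zero] at h2
      exact h2
    rw [hder] at hcau
    rw [← hcau]
    congr 1
    simp only [circleIntegral, sub_zero, smul_eq_mul, hFdef, hcdef]
    congr 1
    funext θ
    ring
  have heq : (fun z => fderiv ℂ f z v) =ᶠ[nhds z₀]
      fun z => (2*Real.pi*Complex.I : ℂ)⁻¹ • ∫ θ in (0:ℝ)..2*Real.pi, F z θ := by
    filter_upwards [ball_mem_nhds z₀ hR0] with z hz using hrep z hz
  rw [heq.differentiableAt_iff]
  exact key.differentiableAt.fun_const_smul _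

/-- Decomposition of a continuous linear functional on a finite product. -/
lemma clm_decomp {n : ℕ} (T : (Fin n → ℂ) →L[ℂ] ℂ) :
    T = ∑ i : Fin n, (ContinuousLinearMap.proj i).smulRight (T (Pi.single i 1)) := by
  apply ContinuousLinearMap.ext
  intro v
  conv_lhs => rw [← Finset.univ_sum_single v]
  rw [map_sum, ContinuousLinearMap.sum_apply]
  refine Finset.sum_congr rfl fun i _ => ?_
  have h1 : Pi.single i (v i) = v i • (Pi.single i 1 : Fin n → ℂ) := by
    rw [← Pi.single_smul, smul_eq_mul, mul_one]
  rw [h1, _root_.map_smul]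
  simp [ContinuousLinearMap.smulRight_apply, ContinuousLinearMap.proj_apply, smul_eq_mul]

/-- The full derivative of a holomorphic function of several complex variables is
complex-differentiable. -/
lemma hasFDerivAt_fderiv_of_differentiableOn {n : ℕ} {f : (Fin n → ℂ) → ℂ}
    {U : Set (Fin n → ℂ)} (hU : IsOpen U) (hf : DifferentiableOn ℂ f U)
    {z₀ : Fin n → ℂ} (hz₀ : z₀ ∈ U) :
    HasFDerivAt (fderiv ℂ f) (fderiv ℂ (fderiv ℂ f) z₀) z₀ := by
  have hd : DifferentiableAt ℂ (fderiv ℂ f) z₀ := by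
    have heq : (fderiv ℂ f) = fun z => ∑ i : Fin n,
        (ContinuousLinearMap.proj i).smulRight (fderiv ℂ f z (Pi.single i 1)) :=
      funext fun z => clm_decomp _
    rw [heq]
    apply DifferentiableAt.fun_sum
    intro i _
    have h1 : DifferentiableAt ℂ (fun z => fderiv ℂ f z (Pi.single i 1)) z₀ := by
      apply differentiableAt_fderiv_apply hU hf hz₀
      simp [Pi.norm_single]
    exact ((ContinuousLinearMap.smulRightL ℂ (Fin n → ℂ) ℂ
      (ContinuousLinearMap.proj i)).differentiableAt).comp z₀ h1
  exact hd.hasFDerivAt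

end AuxOsgood

/-- The complex-bilinear extension `ω_ℂ` of the standard symplectic form to `ℂ^{2n}`. -/
noncomputable def sformC (n : ℕ) (u v : Fin n ⊕ Fin n → ℂ) : ℂ :=
  ∑ i : Fin n, (u (Sum.inl i) * v (Sum.inr i) - u (Sum.inr i) * v (Sum.inl i))

theorem stmt12 (n : ℕ) (hn : 1 ≤ n)
    (U : Set (Fin n → ℂ)) (hU : IsOpen U)
    (H : (Fin n → ℂ) → ℂ) (hH : DifferentiableOn ℂ H U)
    -- `Q(s,t) = Im H(s + it)`, with `s = r ∘ Sum.inl`, `t = r ∘ Sum.inr`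
    (Q : (Fin n ⊕ Fin n → ℝ) → ℝ)
    (hQ : ∀ r, Q r = (H fun i => (r (Sum.inl i) : ℂ) + (r (Sum.inr i) : ℂ) * Complex.I).im)
    (W : Set (Fin n ⊕ Fin n → ℝ))
    (hW : W = {r | (fun i => (r (Sum.inl i) : ℂ) + (r (Sum.inr i) : ℂ) * Complex.I) ∈ U})
    -- `x(s,t) = (s, ∂Q/∂t)`, `y(s,t) = (t, ∂Q/∂s)`
    (x y : (Fin n ⊕ Fin n → ℝ) → (Fin n ⊕ Fin n → ℝ))
    (hx : ∀ r, x r = Sum.elim (fun i => r (Sum.inl i))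
      (fun i => fderiv ℝ Q r (Pi.single (Sum.inr i) 1)))
    (hy : ∀ r, y r = Sum.elim (fun i => r (Sum.inr i))
      (fun i => fderiv ℝ Q r (Pi.single (Sum.inl i) 1)))
    -- `η = x + i·y : W → ℂ^{2n}`
    (η : (Fin n ⊕ Fin n → ℝ) → (Fin n ⊕ Fin n → ℂ))
    (hη : ∀ r, η r = fun k => (x r k : ℂ) + (y r k : ℂ) * Complex.I) :
    ∀ r ∈ W,
      -- (i) the Cauchy–Riemann equations `∂η/∂t_j = i·∂η/∂s_j`
      (∀ j : Fin n,
        fderiv ℝ η r (Pi.single (Sum.inr j) 1) =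
          Complex.I • fderiv ℝ η r (Pi.single (Sum.inl j) 1)) ∧
      -- (ii) the image of `η` is `ω_ℂ`-Lagrangian
      (∀ j k : Fin n,
        sformC n (fderiv ℝ η r (Pi.single (Sum.inl j) 1))
          (fderiv ℝ η r (Pi.single (Sum.inl k) 1)) = 0) := by
  intro r hrW
  classical
  -- the real-linear embedding `L (s,t) = s + it`
  set L : (Fin n ⊕ Fin n → ℝ) →L[ℝ] (Fin n → ℂ) :=
    ContinuousLinearMap.pi (fun i =>
      ((ContinuousLinearMap.proj (Sum.inl i)).smulRight (1:ℂ)) +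
      ((ContinuousLinearMap.proj (Sum.inr i)).smulRight (Complex.I))) with hLdef
  have hL : ∀ p : (Fin n ⊕ Fin n → ℝ), ∀ i, L p i =
      (p (Sum.inl i) : ℂ) + (p (Sum.inr i) : ℂ) * Complex.I := by
    intro p i
    simp [hLdef, ContinuousLinearMap.pi_apply, Complex.real_smul]
  have hLfun : ∀ p, (fun i => (p (Sum.inl i) : ℂ) + (p (Sum.inr i) : ℂ) * Complex.I) = L p :=
    fun p => funext fun i => (hL p i).symm
  have hWeq : W = L ⁻¹' U := by
    rw [hW]; ext p; rw [Set.mem_setOf_eq, Set.mem_preimage, hLfun p]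
  have hz₀U : L r ∈ U := by rw [hWeq] at hrW; exact hrW
  set e : Fin n → (Fin n → ℂ) := fun i => Pi.single i 1 with hedef
  have hLinl : ∀ j, L (Pi.single (Sum.inl j) 1) = e j := by
    intro j; funext i
    by_cases h : i = j <;>
      simp [hL, hedef, Pi.single_apply, h]
  have hLinr : ∀ j, L (Pi.single (Sum.inr j) 1) = Complex.I • e j := by
    intro j; funext i
    by_cases h : i = j <;>
      simp [hL, hedef, Pi.single_apply, h]
  -- second derivative of H at L r
  have hK2 : HasFDerivAt (fderiv ℂ H) (fderiv ℂ (fderiv ℂ H) (L r)) (L r) :=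
    hasFDerivAt_fderiv_of_differentiableOn hU hH hz₀U
  set F'' := fderiv ℂ (fderiv ℂ H) (L r) with hF''def
  have hsymm : ∀ v w, F'' v w = F'' w v := by
    intro v w
    apply second_derivative_symmetric_of_eventually (f := H) (f' := fderiv ℂ H) ?_ hK2
    filter_upwards [hU.mem_nhds hz₀U] with u hu using
      (hH.differentiableAt (hU.mem_nhds hu)).hasFDerivAt
  set g : Fin n → (Fin n → ℂ) → ℂ := fun i z => fderiv ℂ H z (e i) with hgdef
  have hg_has : ∀ i, HasFDerivAt (g i)
      ((ContinuousLinearMap.apply ℂ ℂ (e i)).comp F'') (L r) := by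
    intro i
    exact (ContinuousLinearMap.apply ℂ ℂ (e i)).hasFDerivAt.comp (L r) hK2
  -- the holomorphic map G and its derivative M
  set M : (Fin n → ℂ) →L[ℂ] (Fin n ⊕ Fin n → ℂ) :=
    ContinuousLinearMap.pi (Sum.elim (fun i => ContinuousLinearMap.proj i)
      (fun i => (ContinuousLinearMap.apply ℂ ℂ (e i)).comp F'')) with hMdef
  set G : (Fin n → ℂ) → (Fin n ⊕ Fin n → ℂ) := fun z => Sum.elim (fun i => z i) (fun i => g i z)
    with hGdef
  have hGhas : HasFDerivAt G M (L r) := by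
    rw [hMdef]
    apply hasFDerivAt_pi''
    intro k
    rw [ContinuousLinearMap.proj_pi]
    cases k with
    | inl i => exact hasFDerivAt_apply i (L r)
    | inr i => exact hg_has i
  have hGL : HasFDerivAt (G ∘ L) ((M.restrictScalars ℝ).comp L) r :=
    (hGhas.restrictScalars ℝ).comp r L.hasFDerivAt
  -- η agrees with G ∘ L on W
  have hηeq : ∀ p ∈ W, η p = G (L p) := by
    intro p hp
    have hpU : L p ∈ U := by rw [hWeq] at hp; exact hp
    have hQd : HasFDerivAt Q
        (Complex.imCLM.comp (((fderiv ℂ H (L p)).restrictScalars ℝ).comp L)) p := by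
      have hQfun : Q = fun q => Complex.imCLM (H (L q)) := by
        funext q; rw [hQ q]
        simp only [Complex.imCLM_apply]
        exact congrArg Complex.im (congrArg H (hLfun q))
      rw [hQfun]
      exact (Complex.imCLM.hasFDerivAt).comp p
        ((((hH.differentiableAt (hU.mem_nhds hpU)).hasFDerivAt).restrictScalars ℝ).comp p
          L.hasFDerivAt)
    have hQf : fderiv ℝ Q p =
        Complex.imCLM.comp (((fderiv ℂ H (L p)).restrictScalars ℝ).comp L) := hQd.fderiv
    have hQt : ∀ i, fderiv ℝ Q p (Pi.single (Sum.inr i) 1) = (fderiv ℂ H (L p) (e i)).re := by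
      intro i
      rw [hQf]
      simp only [ContinuousLinearMap.comp_apply, Complex.imCLM_apply,
        ContinuousLinearMap.coe_restrictScalars']
      rw [hLinr i, _root_.map_smul]
      simp [Complex.mul_im]
    have hQs : ∀ i, fderiv ℝ Q p (Pi.single (Sum.inl i) 1) = (fderiv ℂ H (L p) (e i)).im := by
      intro i
      rw [hQf]
      simp only [ContinuousLinearMap.comp_apply, Complex.imCLM_apply,
        ContinuousLinearMap.coe_restrictScalars']
      rw [hLinl i]
    rw [hη p]
    funext k
    cases k with
    | inl i =>
      rw [hx p, hy p]
      show ((p (Sum.inl i) : ℝ) : ℂ) + ((p (Sum.inr i) : ℝ) : ℂ) * Complex.I = G (L p) (Sum.inl i)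
      rw [hGdef]
      show _ = L p i
      rw [hL p i]
    | inr i =>
      rw [hx p, hy p]
      show ((fderiv ℝ Q p (Pi.single (Sum.inr i) 1) : ℝ) : ℂ) +
        ((fderiv ℝ Q p (Pi.single (Sum.inl i) 1) : ℝ) : ℂ) * Complex.I = G (L p) (Sum.inr i)
      rw [hQt i, hQs i]
      rw [hGdef]
      show _ = g i (L p)
      rw [hgdef]
      exact Complex.re_add_im _
  have hηev : η =ᶠ[nhds r] (G ∘ L) := by
    have hWopen : IsOpen W := by rw [hWeq]; exact hU.preimage L.continuous
    filter_upwards [hWopen.mem_nhds hrW] with p hp using hηeq p hp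
  have hηhas : HasFDerivAt η ((M.restrictScalars ℝ).comp L) r :=
    hGL.congr_of_eventuallyEq hηev
  have hfeq : fderiv ℝ η r = (M.restrictScalars ℝ).comp L := hηhas.fderiv
  have hMl : ∀ j, fderiv ℝ η r (Pi.single (Sum.inl j) 1) = M (e j) := by
    intro j; rw [hfeq]
    simp only [ContinuousLinearMap.comp_apply, ContinuousLinearMap.coe_restrictScalars']
    rw [hLinl j]
  have hMr : ∀ j, fderiv ℝ η r (Pi.single (Sum.inr j) 1) = Complex.I • M (e j) := by
    intro j; rw [hfeq]
    simp only [ContinuousLinearMap.comp_apply, ContinuousLinearMap.coe_restrictScalars']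
    rw [hLinr j, _root_.map_smul]
  constructor
  · intro j; rw [hMl j, hMr j]
  · intro j k
    rw [hMl j, hMl k]
    have hMc1 : ∀ j i, M (e j) (Sum.inl i) = e j i := by
      intro j i; rw [hMdef]
      simp [ContinuousLinearMap.pi_apply]
    have hMc2 : ∀ j i, M (e j) (Sum.inr i) = F'' (e j) (e i) := by
      intro j i; rw [hMdef]
      simp [ContinuousLinearMap.pi_apply, ContinuousLinearMap.comp_apply]
    simp only [sformC, hMc1, hMc2]
    have hterm : ∀ i : Fin n, e j i * F'' (e k) (e i) - F'' (e j) (e i) * e k i =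
        (if i = j then F'' (e k) (e i) else 0) - (if i = k then F'' (e j) (e i) else 0) := by
      intro i
      rw [hedef]
      simp [Pi.single_apply, ite_mul, mul_ite]
    rw [Finset.sum_congr rfl fun i _ => hterm i, Finset.sum_sub_distrib,
      Finset.sum_ite_eq' Finset.univ j, Finset.sum_ite_eq' Finset.univ k]
    simp [hsymm (e k) (e j)]
end

section
/- Let n ≥ 1, let P, A ∈ GL(2n, ℝ), and let W := {(P·u, P·A·u) : u ∈ ℝ^{2n}} ⊆ ℝ^{2n} × ℝ^{2n}. Assume Ω vanishes identically on W, i.e. Ω(w, w') = 0 for all w, w' ∈ W. Then the following are equivalent: (1) Ω₁ vanishes identically on W; (2) W is invariant under the involution K(u,a) := (a,u), i.e. K(W) = W; (3) A² = I_{2n}; (4) A is similar to K_{2n}, i.e. there exists S ∈ GL(2n, ℝ) with A = S·K_{2n}·S^{-1}. -/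
open Matrix

/-- The symplectic form `Ω` on `ℝ^{2n} × ℝ^{2n}`:  `Ω((u,a),(v,b)) = ω(u,b) + ω(a,v)`. -/
noncomputable def OmegaForm (n : ℕ)
    (w w' : (Fin n ⊕ Fin n → ℝ) × (Fin n ⊕ Fin n → ℝ)) : ℝ :=
  sform n w.1 w'.2 + sform n w.2 w'.1

/-- The form `Ω₁((u,a),(v,b)) = ω(u,v) + ω(a,b)` on `ℝ^{2n} × ℝ^{2n}`. -/
noncomputable def Omega1Form (n : ℕ)
    (w w' : (Fin n ⊕ Fin n → ℝ) × (Fin n ⊕ Fin n → ℝ)) : ℝ :=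
  sform n w.1 w'.1 + sform n w.2 w'.2

noncomputable def Jmat (n : ℕ) : Matrix (Fin n ⊕ Fin n) (Fin n ⊕ Fin n) ℝ :=
  Matrix.fromBlocks 0 1 (-1) 0


lemma sform_eq (n : ℕ) (u v : Fin n ⊕ Fin n → ℝ) :
    sform n u v = u ⬝ᵥ (Jmat n).mulVec v := by
  simp [sform, Jmat, dotProduct, Matrix.mulVec, Fintype.sum_sum_type,
    Matrix.fromBlocks, Matrix.one_apply, mul_sub, Finset.mul_sum, mul_ite]
  all_goals ring_nf

lemma dot_ext {m : Type*} [Fintype m] [DecidableEq m]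
    (N : Matrix m m ℝ) (h : ∀ u v : m → ℝ, u ⬝ᵥ N.mulVec v = 0) : N = 0 := by
  ext i j
  have := h (Pi.single i 1) (Pi.single j 1)
  simpa [Matrix.mulVec_single, dotProduct, Pi.single_apply] using this

lemma sform_mulVec' (n : ℕ) (X Y : Matrix (Fin n ⊕ Fin n) (Fin n ⊕ Fin n) ℝ)
    (u v : Fin n ⊕ Fin n → ℝ) :
    (X.mulVec u) ⬝ᵥ (Jmat n).mulVec (Y.mulVec v) = u ⬝ᵥ (Xᵀ * Jmat n * Y).mulVec v := by
  rw [Matrix.dotProduct_mulVec, ← Matrix.vecMul_transpose, Matrix.vecMul_vecMul,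
    ← Matrix.dotProduct_mulVec, Matrix.mulVec_mulVec, Matrix.mul_assoc]

lemma J_sq (n : ℕ) : Jmat n * Jmat n = -1 := by
  simp [Jmat, Matrix.fromBlocks_multiply]
  rw [← Matrix.fromBlocks_one, Matrix.fromBlocks_neg]
  simp

lemma J_isUnit (n : ℕ) : IsUnit (Jmat n).det := by
  have h2 : (Jmat n).det * (Jmat n).det = 1 := by
    have := congrArg Matrix.det (J_sq n)
    rwa [Matrix.det_mul, Matrix.det_neg, Matrix.det_one, Fintype.card_sum, Fintype.card_fin,
      mul_one, ← two_mul, pow_mul, neg_one_sq, one_pow] at this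
  exact IsUnit.of_mul_eq_one _ h2

lemma sform_matrix (n : ℕ) (X Y : Matrix (Fin n ⊕ Fin n) (Fin n ⊕ Fin n) ℝ)
    (u v : Fin n ⊕ Fin n → ℝ) :
    sform n (X.mulVec u) (Y.mulVec v) = u ⬝ᵥ (Xᵀ * Jmat n * Y).mulVec v := by
  rw [sform_eq]
  exact sform_mulVec' n X Y u v

lemma K_sq (n : ℕ) : Kmat n * Kmat n = 1 := by
  simp [Kmat, Matrix.fromBlocks_multiply]

lemma similar_of_involution (n : ℕ) (A : Matrix (Fin n ⊕ Fin n) (Fin n ⊕ Fin n) ℝ)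
    (h1 : A * A = 1) (htr : A.trace = 0) :
    ∃ S : Matrix (Fin n ⊕ Fin n) (Fin n ⊕ Fin n) ℝ,
      IsUnit S.det ∧ A = S * Kmat n * S⁻¹ := by
  classical
  set V := (Fin n ⊕ Fin n → ℝ)
  set f : V →ₗ[ℝ] V := Matrix.toLin' A with hfdef
  have hff : ∀ x : V, f (f x) = x := by
    intro x
    show Matrix.toLin' A (Matrix.toLin' A x) = x
    simp [Matrix.toLin'_apply, Matrix.mulVec_mulVec, h1]
  set Em : Submodule ℝ V := LinearMap.ker (f + LinearMap.id) with hEm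
  set Ep : Submodule ℝ V := LinearMap.ker (f - LinearMap.id) with hEp
  have memp : ∀ x : V, x ∈ Ep ↔ f x = x := by
    intro x; simp [hEp, LinearMap.mem_ker, sub_eq_zero]
  have memm : ∀ x : V, x ∈ Em ↔ f x = -x := by
    intro x
    simp [hEm, LinearMap.mem_ker, add_eq_zero_iff_eq_neg]
  have hcompl : IsCompl Em Ep := by
    constructor
    · rw [disjoint_iff_inf_le]
      intro x hx
      rw [Submodule.mem_inf] at hx
      obtain ⟨hxm, hxp⟩ := hx
      rw [memm] at hxm; rw [memp] at hxp
      rw [Submodule.mem_bot]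
      have h2 : (2 : ℝ) • x = 0 := by
        rw [two_smul]
        nth_rewrite 1 [← hxp]
        rw [hxm]; abel
      rcases smul_eq_zero.mp h2 with h | h
      · norm_num at h
      · exact h
    · rw [codisjoint_iff_le_sup]
      intro x _
      have hx : x = (2⁻¹ : ℝ) • (x - f x) + (2⁻¹ : ℝ) • (x + f x) := by
        simp [smul_sub, smul_add]
        module
      rw [hx]
      refine Submodule.add_mem_sup (Submodule.smul_mem _ _ ?_) (Submodule.smul_mem _ _ ?_)
      · rw [memm]; simp only [map_sub, hff]; abel
      · rw [memp]; simp only [map_add, hff]; abel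
  -- projection onto Ep
  set pr : V →ₗ[ℝ] V := (2⁻¹ : ℝ) • (LinearMap.id + f) with hpr
  have hprx : ∀ x : V, pr x = (2⁻¹ : ℝ) • (x + f x) := by
    intro x; simp [hpr]
  have hproj : LinearMap.IsProj Ep pr := by
    constructor
    · intro x
      rw [memp, hprx, _root_.map_smul, map_add, hff]
      rw [add_comm]
    · intro x hx
      rw [memp] at hx
      rw [hprx, hx, ← two_smul ℝ x, smul_smul]
      norm_num
  have hdimV : Module.finrank ℝ V = 2 * n := by
    simp [V, Module.finrank_fintype_fun_eq_card, two_mul]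
  have htrf : LinearMap.trace ℝ V f = 0 := by
    rw [hfdef, LinearMap.trace_eq_matrix_trace ℝ (Pi.basisFun ℝ (Fin n ⊕ Fin n)),
      LinearMap.toMatrix_eq_toMatrix', LinearMap.toMatrix'_toLin']
    exact htr
  have htrpr : LinearMap.trace ℝ V pr = (n : ℝ) := by
    rw [hpr, _root_.map_smul, map_add, LinearMap.trace_id, htrf, hdimV]
    simp [smul_eq_mul]
  have hdimEp : Module.finrank ℝ Ep = n := by
    have := hproj.trace
    rw [htrpr] at this
    exact_mod_cast this.symm
  have hdimEm : Module.finrank ℝ Em = n := by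
    have := Submodule.finrank_add_eq_of_isCompl hcompl
    rw [hdimEp, hdimV] at this
    omega
  -- bases
  let bm : Module.Basis (Fin n) ℝ Em := (Module.finBasis ℝ Em).reindex (finCongr hdimEm)
  let bp : Module.Basis (Fin n) ℝ Ep := (Module.finBasis ℝ Ep).reindex (finCongr hdimEp)
  let b : Module.Basis (Fin n ⊕ Fin n) ℝ V :=
    (bm.prod bp).map (Submodule.prodEquivOfIsCompl Em Ep hcompl)
  have hbinl : ∀ i : Fin n, (b (Sum.inl i) : V) = (bm i : V) := by
    intro i
    simp [b, Module.Basis.map_apply, Module.Basis.prod_apply, Submodule.coe_prodEquivOfIsCompl']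
  have hbinr : ∀ i : Fin n, (b (Sum.inr i) : V) = (bp i : V) := by
    intro i
    simp [b, Module.Basis.map_apply, Module.Basis.prod_apply, Submodule.coe_prodEquivOfIsCompl']
  have hfbl : ∀ i : Fin n, f (b (Sum.inl i)) = -(b (Sum.inl i)) := by
    intro i
    rw [hbinl]
    exact (memm _).mp (bm i).2
  have hfbr : ∀ i : Fin n, f (b (Sum.inr i)) = b (Sum.inr i) := by
    intro i
    rw [hbinr]
    exact (memp _).mp (bp i).2
  set S : Matrix (Fin n ⊕ Fin n) (Fin n ⊕ Fin n) ℝ := Matrix.of fun i j => (b j) i with hS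
  have hS' : S = (Pi.basisFun ℝ (Fin n ⊕ Fin n)).toMatrix ⇑b := by
    ext i j
    simp [hS, Module.Basis.toMatrix_apply, Pi.basisFun_repr]
  have hSunit : IsUnit S.det := by
    rw [hS']
    exact Matrix.isUnit_det_of_right_inverse
      ((Pi.basisFun ℝ (Fin n ⊕ Fin n)).toMatrix_mul_toMatrix_flip b)
  have lhs : ∀ i j, (A * S) i j = f (b j) i := by
    intro i j
    rw [Matrix.mul_apply, hfdef, Matrix.toLin'_apply]
    simp [Matrix.mulVec, dotProduct, hS]
  have hAS : A * S = S * Kmat n := by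
    ext i j
    cases j with
    | inl j0 =>
      rw [lhs, hfbl j0]
      simp [hS, Matrix.mul_apply, Kmat, Matrix.fromBlocks, Fintype.sum_sum_type,
        Matrix.one_apply, mul_ite]
      rfl
    | inr j0 =>
      rw [lhs, hfbr j0]
      simp [hS, Matrix.mul_apply, Kmat, Matrix.fromBlocks, Fintype.sum_sum_type,
        Matrix.one_apply, mul_ite]
  refine ⟨S, hSunit, ?_⟩
  have hinv := Matrix.mul_nonsing_inv S hSunit
  calc A = A * (S * S⁻¹) := by rw [hinv, mul_one]
    _ = (A * S) * S⁻¹ := by rw [Matrix.mul_assoc]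
    _ = S * Kmat n * S⁻¹ := by rw [hAS]

theorem stmt13 (n : ℕ) (hn : 1 ≤ n)
    (P A : Matrix (Fin n ⊕ Fin n) (Fin n ⊕ Fin n) ℝ)
    (hP : IsUnit P.det) (hA : IsUnit A.det)
    (W : Set ((Fin n ⊕ Fin n → ℝ) × (Fin n ⊕ Fin n → ℝ)))
    (hW : W = {w | ∃ u : Fin n ⊕ Fin n → ℝ, w = (P.mulVec u, P.mulVec (A.mulVec u))})
    (hΩ : ∀ w ∈ W, ∀ w' ∈ W, OmegaForm n w w' = 0) :
    List.TFAE
      [ ∀ w ∈ W, ∀ w' ∈ W, Omega1Form n w w' = 0,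
        (fun w : (Fin n ⊕ Fin n → ℝ) × (Fin n ⊕ Fin n → ℝ) => (w.2, w.1)) '' W = W,
        A * A = 1,
        ∃ S : Matrix (Fin n ⊕ Fin n) (Fin n ⊕ Fin n) ℝ,
          IsUnit S.det ∧ A = S * Kmat n * S⁻¹ ] := by
  classical
  set M : Matrix (Fin n ⊕ Fin n) (Fin n ⊕ Fin n) ℝ := Pᵀ * Jmat n * P with hMdef
  have hMunit : IsUnit M.det := by
    rw [hMdef, Matrix.det_mul, Matrix.det_mul, Matrix.det_transpose]
    exact (hP.mul (J_isUnit n)).mul hP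
  have hPinj : Function.Injective P.mulVec :=
    (Matrix.mulVec_injective_iff_isUnit).mpr ((Matrix.isUnit_iff_isUnit_det P).mpr hP)
  -- the matrix identity coming from hΩ
  have hM : M * A + Aᵀ * M = 0 := by
    apply dot_ext
    intro u v
    have h1 : (P.mulVec u, P.mulVec (A.mulVec u)) ∈ W := by
      rw [hW]; exact ⟨u, rfl⟩
    have h2 : (P.mulVec v, P.mulVec (A.mulVec v)) ∈ W := by
      rw [hW]; exact ⟨v, rfl⟩
    have := hΩ _ h1 _ h2
    rw [OmegaForm] at this
    simp only [Matrix.mulVec_mulVec] at this ⊢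
    rw [sform_matrix, sform_matrix] at this
    have e1 : Pᵀ * Jmat n * (P * A) = M * A := by
      rw [hMdef]
      simp only [Matrix.mul_assoc]
    have e2 : (P * A)ᵀ * Jmat n * P = Aᵀ * M := by
      rw [Matrix.transpose_mul, hMdef]
      simp only [Matrix.mul_assoc]
    rw [e1, e2] at this
    rw [Matrix.add_mulVec, dotProduct_add, this]
  have hMA : Aᵀ * M = -(M * A) := by
    rw [eq_neg_iff_add_eq_zero, add_comm]
    exact hM
  tfae_have 3 → 4 := by
    intro h3
    have htr : A.trace = 0 := by
      have hA2 : A = -(M⁻¹ * (Aᵀ * M)) := by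
        rw [hMA, mul_neg, neg_neg, ← Matrix.mul_assoc, Matrix.nonsing_inv_mul M hMunit, one_mul]
      have : A.trace = -(Aᵀ).trace := by
        nth_rewrite 1 [hA2]
        rw [Matrix.trace_neg, Matrix.trace_mul_comm, Matrix.mul_assoc,
          Matrix.mul_nonsing_inv M hMunit, mul_one]
      rw [Matrix.trace_transpose] at this
      linarith
    exact similar_of_involution n A h3 htr
  tfae_have 4 → 3 := by
    rintro ⟨S, hSu, rfl⟩
    have hinv : S⁻¹ * S = 1 := Matrix.nonsing_inv_mul S hSu
    calc S * Kmat n * S⁻¹ * (S * Kmat n * S⁻¹)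
        = S * (Kmat n * (S⁻¹ * S) * Kmat n) * S⁻¹ := by
          simp only [Matrix.mul_assoc]
      _ = 1 := by rw [hinv, mul_one, K_sq, mul_one, Matrix.mul_nonsing_inv S hSu]
  tfae_have 3 → 1 := by
    intro h3 w hw w' hw'
    rw [hW] at hw hw'
    obtain ⟨u, rfl⟩ := hw
    obtain ⟨v, rfl⟩ := hw'
    have hATMA : Aᵀ * M * A = -M := by
      rw [hMA, neg_mul, Matrix.mul_assoc, h3, mul_one]
    rw [Omega1Form]
    simp only [Matrix.mulVec_mulVec]
    rw [sform_matrix, sform_matrix]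
    have e2 : (P * A)ᵀ * Jmat n * (P * A) = Aᵀ * M * A := by
      rw [Matrix.transpose_mul, hMdef]
      simp only [Matrix.mul_assoc]
    rw [e2, hATMA, ← hMdef, ← dotProduct_add, ← Matrix.add_mulVec]
    simp
  tfae_have 1 → 3 := by
    intro h1
    have hmat : M + Aᵀ * M * A = 0 := by
      apply dot_ext
      intro u v
      have m1 : (P.mulVec u, P.mulVec (A.mulVec u)) ∈ W := by
        rw [hW]; exact ⟨u, rfl⟩
      have m2 : (P.mulVec v, P.mulVec (A.mulVec v)) ∈ W := by
        rw [hW]; exact ⟨v, rfl⟩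
      have := h1 _ m1 _ m2
      rw [Omega1Form] at this
      simp only [Matrix.mulVec_mulVec] at this
      rw [sform_matrix, sform_matrix] at this
      have e2 : (P * A)ᵀ * Jmat n * (P * A) = Aᵀ * M * A := by
        rw [Matrix.transpose_mul, hMdef]
        simp only [Matrix.mul_assoc]
      rw [e2, ← hMdef] at this
      rw [Matrix.add_mulVec, dotProduct_add, this]
    have hMM : M * (A * A) = M := by
      have : Aᵀ * M * A = -(M * (A * A)) := by
        rw [hMA, neg_mul, Matrix.mul_assoc]
      rw [this, add_neg_eq_zero] at hmat
      exact hmat.symm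
    calc A * A = M⁻¹ * (M * (A * A)) := by
          rw [← Matrix.mul_assoc, Matrix.nonsing_inv_mul M hMunit, one_mul]
      _ = 1 := by rw [hMM, Matrix.nonsing_inv_mul M hMunit]
  tfae_have 3 → 2 := by
    intro h3
    have hAA : ∀ u : Fin n ⊕ Fin n → ℝ, A.mulVec (A.mulVec u) = u := by
      intro u
      rw [Matrix.mulVec_mulVec, h3, Matrix.one_mulVec]
    rw [hW]
    ext w
    simp only [Set.mem_image, Set.mem_setOf_eq]
    constructor
    · rintro ⟨w0, ⟨u, rfl⟩, rfl⟩
      exact ⟨A.mulVec u, by rw [hAA]⟩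
    · rintro ⟨u, rfl⟩
      exact ⟨(P.mulVec (A.mulVec u), P.mulVec u), ⟨A.mulVec u, by rw [hAA]⟩, rfl⟩
  tfae_have 2 → 3 := by
    intro h2
    have hmem : ∀ u : Fin n ⊕ Fin n → ℝ, (P.mulVec (A.mulVec u), P.mulVec u) ∈ W := by
      intro u
      rw [← h2]
      exact ⟨(P.mulVec u, P.mulVec (A.mulVec u)), by rw [hW]; exact ⟨u, rfl⟩, rfl⟩
    have hAA : ∀ u : Fin n ⊕ Fin n → ℝ, A.mulVec (A.mulVec u) = u := by
      intro u
      have := hmem u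
      rw [hW] at this
      obtain ⟨v, hv⟩ := this
      have h1 : P.mulVec (A.mulVec u) = P.mulVec v := congrArg Prod.fst hv
      have h2' : P.mulVec u = P.mulVec (A.mulVec v) := congrArg Prod.snd hv
      have hv' : v = A.mulVec u := (hPinj h1).symm
      rw [hv'] at h2'
      exact (hPinj h2').symm
    ext i j
    have := congrFun (hAA (Pi.single j 1)) i
    rw [Matrix.mulVec_mulVec] at this
    simpa [Matrix.mulVec_single, Matrix.one_apply, Pi.single_apply] using this
  tfae_finish
end
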